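/- Let (ξ, ξ₁, ξ₂) be an orthonormal basis of ℝ³, let f, g : ℝ → ℝ be C¹, and let μ ≠ 0. Define the intermittent shear velocity flow W(t,x) = f(ξ₁·x + μt) g(ξ·x) ξ₁ and the intermittent shear magnetic flow D(t,x) = f(ξ₁·x + μt) g(ξ·x) ξ₂. Then for all (t,x): div(W⊗W)(t,x) = μ⁻¹ ∂_t( f(ξ₁·x + μt)² g(ξ·x)² ) ξ₁, div(D⊗W)(t,x) = μ⁻¹ ∂_t( f(ξ₁·x + μt)² g(ξ·x)² ) ξ₂, div(W⊗D)(t,x) = 0, and div(D⊗D)(t,x) = 0, where all divergences are taken in the spatial variable x. -/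

import Mathlib

/-- Partial derivative in the `i`-th coordinate direction of a scalar field on `ℝ³`. -/
noncomputable def pderiv3 (i : Fin 3) (f : (Fin 3 → ℝ) → ℝ) (x : Fin 3 → ℝ) : ℝ :=
  fderiv ℝ f x (Pi.single i 1)

/-- Divergence (row-wise) of a matrix field on `ℝ³`: `(div M)ⁱ = Σⱼ ∂ⱼ Mⁱʲ`. -/
noncomputable def mdiv (M : (Fin 3 → ℝ) → Fin 3 → Fin 3 → ℝ) (x : Fin 3 → ℝ) (i : Fin 3) : ℝ :=
  ∑ j, pderiv3 j (fun y => M y i j) x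

/-- Tensor (outer) product of two vectors of `ℝ³`: `(a⊗b)ᵢⱼ = aᵢbⱼ`. -/
def outer (a b : Fin 3 → ℝ) : Fin 3 → Fin 3 → ℝ := fun i j => a i * b j

/-- Euclidean inner product on `ℝ³` (as `Fin 3 → ℝ`). -/
def dot3 (a b : Fin 3 → ℝ) : ℝ := ∑ i, a i * b i

/- Auxiliary material -/

noncomputable def dotCLM (a : Fin 3 → ℝ) : (Fin 3 → ℝ) →L[ℝ] ℝ :=
  ∑ i, a i • ContinuousLinearMap.proj i

lemma dotCLM_apply (a v : Fin 3 → ℝ) : dotCLM a v = dot3 a v := by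
  simp [dotCLM, dot3, ContinuousLinearMap.sum_apply]

lemma dotCLM_single (a : Fin 3 → ℝ) (j : Fin 3) : dotCLM a (Pi.single j 1) = a j := by
  rw [dotCLM_apply]
  simp [dot3, Pi.single_apply]

lemma dot3_comm (a b : Fin 3 → ℝ) : dot3 a b = dot3 b a := by
  simp [dot3, mul_comm]

lemma hasFDerivAt_scalarF (ξ ξ₁ : Fin 3 → ℝ) (f g : ℝ → ℝ)
    (hf : ContDiff ℝ 1 f) (hg : ContDiff ℝ 1 g) (c : ℝ) (x : Fin 3 → ℝ) :
    HasFDerivAt (fun y => f (dot3 ξ₁ y + c) * g (dot3 ξ y))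
      (f (dot3 ξ₁ x + c) • (deriv g (dot3 ξ x) • dotCLM ξ)
        + g (dot3 ξ x) • (deriv f (dot3 ξ₁ x + c) • dotCLM ξ₁)) x := by
  have e1 : (fun y : Fin 3 → ℝ => dot3 ξ₁ y + c) = fun y => dotCLM ξ₁ y + c := by
    funext y; rw [dotCLM_apply]
  have e2 : (fun y : Fin 3 → ℝ => dot3 ξ y) = fun y => dotCLM ξ y := by
    funext y; rw [dotCLM_apply]
  have h1 : HasFDerivAt (fun y : Fin 3 → ℝ => dot3 ξ₁ y + c) (dotCLM ξ₁) x := by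
    rw [e1]; exact ((dotCLM ξ₁).hasFDerivAt).add_const c
  have h2 : HasFDerivAt (fun y : Fin 3 → ℝ => dot3 ξ y) (dotCLM ξ) x := by
    rw [e2]; exact (dotCLM ξ).hasFDerivAt
  have hFf : HasFDerivAt (fun y => f (dot3 ξ₁ y + c))
      (deriv f (dot3 ξ₁ x + c) • dotCLM ξ₁) x :=
    ((hf.differentiable one_ne_zero (dot3 ξ₁ x + c)).hasDerivAt).comp_hasFDerivAt x h1
  have hFg : HasFDerivAt (fun y => g (dot3 ξ y))
      (deriv g (dot3 ξ x) • dotCLM ξ) x :=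
    ((hg.differentiable one_ne_zero (dot3 ξ x)).hasDerivAt).comp_hasFDerivAt x h2
  exact hFf.mul hFg

lemma mdiv_outer_eq (ξ ξ₁ : Fin 3 → ℝ) (f g : ℝ → ℝ)
    (hf : ContDiff ℝ 1 f) (hg : ContDiff ℝ 1 g) (c : ℝ)
    (a b x : Fin 3 → ℝ) (i : Fin 3) :
    mdiv (fun y => outer ((f (dot3 ξ₁ y + c) * g (dot3 ξ y)) • a)
                         ((f (dot3 ξ₁ y + c) * g (dot3 ξ y)) • b)) x i
      = 2 * (f (dot3 ξ₁ x + c) * g (dot3 ξ x)) * a i *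
        (f (dot3 ξ₁ x + c) * deriv g (dot3 ξ x) * dot3 b ξ
          + g (dot3 ξ x) * deriv f (dot3 ξ₁ x + c) * dot3 b ξ₁) := by
  set F : (Fin 3 → ℝ) → ℝ := fun y => f (dot3 ξ₁ y + c) * g (dot3 ξ y) with hFdef
  set u := dot3 ξ₁ x + c
  set v := dot3 ξ x
  set DF := f u • (deriv g v • dotCLM ξ) + g v • (deriv f u • dotCLM ξ₁) with hDF
  have hF : HasFDerivAt F DF x := hasFDerivAt_scalarF ξ ξ₁ f g hf hg c x
  have hDFj : ∀ j : Fin 3, DF (Pi.single j 1)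
      = f u * (deriv g v * ξ j) + g v * (deriv f u * ξ₁ j) := by
    intro j
    simp [hDF, dotCLM_single]
  have key : ∀ j : Fin 3,
      pderiv3 j (fun y => (F y • a) i * (F y • b) j) x
        = (F x * a i) * (b j * DF (Pi.single j 1))
          + (F x * b j) * (a i * DF (Pi.single j 1)) := by
    intro j
    have hEntry : HasFDerivAt (fun y => (F y * a i) * (F y * b j))
        ((F x * a i) • (b j • DF) + (F x * b j) • (a i • DF)) x :=
      (hF.mul_const (a i)).mul (hF.mul_const (b j))
    have e : (fun y => (F y • a) i * (F y • b) j) = fun y => (F y * a i) * (F y * b j) := by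
      funext y; simp [mul_comm]
    rw [pderiv3, e, hEntry.fderiv]
    simp [mul_comm]
  unfold mdiv
  simp only [outer]
  calc (∑ j, pderiv3 j (fun y => (F y • a) i * (F y • b) j) x)
      = ∑ j : Fin 3, ((F x * a i) * (b j * DF (Pi.single j 1))
          + (F x * b j) * (a i * DF (Pi.single j 1))) := by
        exact Finset.sum_congr rfl fun j _ => key j
    _ = ∑ j : Fin 3, ((2 * F x * a i * (f u * deriv g v)) * (b j * ξ j)
          + (2 * F x * a i * (g v * deriv f u)) * (b j * ξ₁ j)) := by
        refine Finset.sum_congr rfl fun j _ => ?_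
        rw [hDFj j]; ring
    _ = (2 * F x * a i * (f u * deriv g v)) * dot3 b ξ
          + (2 * F x * a i * (g v * deriv f u)) * dot3 b ξ₁ := by
        rw [Finset.sum_add_distrib, ← Finset.mul_sum, ← Finset.mul_sum]
        rfl
    _ = 2 * (f u * g v) * a i *
        (f u * deriv g v * dot3 b ξ + g v * deriv f u * dot3 b ξ₁) := by
        have : F x = f u * g v := rfl
        rw [this]; ring

lemma deriv_time (f g : ℝ → ℝ) (hf : ContDiff ℝ 1 f) (c d μ t : ℝ) :
    deriv (fun s => f (c + μ * s) ^ 2 * g d ^ 2) t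
      = 2 * f (c + μ * t) * deriv f (c + μ * t) * μ * g d ^ 2 := by
  have h1 : HasDerivAt (fun s : ℝ => c + μ * s) μ t := by
    simpa using ((hasDerivAt_id t).const_mul μ).const_add c
  have h2 : HasDerivAt (fun s => f (c + μ * s)) (deriv f (c + μ * t) * μ) t :=
    ((hf.differentiable one_ne_zero (c + μ * t)).hasDerivAt).comp t h1
  have h3 := (h2.pow 2).mul_const (g d ^ 2)
  have h3' : HasDerivAt (fun s => f (c + μ * s) ^ 2 * g d ^ 2)
      (2 * f (c + μ * t) * (deriv f (c + μ * t) * μ) * g d ^ 2) t :=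
    h3.congr_deriv (by norm_num)
  rw [h3'.deriv]
  ring

/-- Divergence identities of the intermittent shear building blocks
`W(t,x) = f(ξ₁·x + μt) g(ξ·x) ξ₁` and `D(t,x) = f(ξ₁·x + μt) g(ξ·x) ξ₂`:
`div(W⊗W) = μ⁻¹ ∂_t(f² g²) ξ₁`, `div(D⊗W) = μ⁻¹ ∂_t(f² g²) ξ₂`,
`div(W⊗D) = 0`, and `div(D⊗D) = 0`. -/
theorem intermittent_shear_flow_div_identities
    (ξ ξ₁ ξ₂ : Fin 3 → ℝ)
    (hξ : dot3 ξ ξ = 1) (hξ₁ : dot3 ξ₁ ξ₁ = 1) (hξ₂ : dot3 ξ₂ ξ₂ = 1)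
    (h01 : dot3 ξ ξ₁ = 0) (h02 : dot3 ξ ξ₂ = 0) (h12 : dot3 ξ₁ ξ₂ = 0)
    (f g : ℝ → ℝ) (hf : ContDiff ℝ 1 f) (hg : ContDiff ℝ 1 g)
    (μ : ℝ) (hμ : μ ≠ 0)
    (W D : ℝ → (Fin 3 → ℝ) → Fin 3 → ℝ)
    (hW : ∀ t x, W t x = (f (dot3 ξ₁ x + μ * t) * g (dot3 ξ x)) • ξ₁)
    (hD : ∀ t x, D t x = (f (dot3 ξ₁ x + μ * t) * g (dot3 ξ x)) • ξ₂) :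
    ∀ t x,
      (∀ i, mdiv (fun y => outer (W t y) (W t y)) x i
        = μ⁻¹ * deriv (fun s => f (dot3 ξ₁ x + μ * s) ^ 2 * g (dot3 ξ x) ^ 2) t * ξ₁ i) ∧
      (∀ i, mdiv (fun y => outer (D t y) (W t y)) x i
        = μ⁻¹ * deriv (fun s => f (dot3 ξ₁ x + μ * s) ^ 2 * g (dot3 ξ x) ^ 2) t * ξ₂ i) ∧
      (∀ i, mdiv (fun y => outer (W t y) (D t y)) x i = 0) ∧
      (∀ i, mdiv (fun y => outer (D t y) (D t y)) x i = 0) := by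
  intro t x
  have hWfun : ∀ y, W t y = (f (dot3 ξ₁ y + μ * t) * g (dot3 ξ y)) • ξ₁ := fun y => hW t y
  have hDfun : ∀ y, D t y = (f (dot3 ξ₁ y + μ * t) * g (dot3 ξ y)) • ξ₂ := fun y => hD t y
  set u := dot3 ξ₁ x + μ * t with hu
  set v := dot3 ξ x with hv
  have hdt : deriv (fun s => f (dot3 ξ₁ x + μ * s) ^ 2 * g (dot3 ξ x) ^ 2) t
      = 2 * f u * deriv f u * μ * g v ^ 2 :=
    deriv_time f g hf (dot3 ξ₁ x) (dot3 ξ x) μ t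
  have h10 : dot3 ξ₁ ξ = 0 := by rw [dot3_comm]; exact h01
  have h20 : dot3 ξ₂ ξ = 0 := by rw [dot3_comm]; exact h02
  have h21 : dot3 ξ₂ ξ₁ = 0 := by rw [dot3_comm]; exact h12
  refine ⟨fun i => ?_, fun i => ?_, fun i => ?_, fun i => ?_⟩
  · have := mdiv_outer_eq ξ ξ₁ f g hf hg (μ * t) ξ₁ ξ₁ x i
    simp only [← hWfun] at this
    rw [this, hdt, ← hu, ← hv, h10, hξ₁]
    field_simp
    ring
  · have := mdiv_outer_eq ξ ξ₁ f g hf hg (μ * t) ξ₂ ξ₁ x i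
    simp only [← hWfun, ← hDfun] at this
    rw [this, hdt, ← hu, ← hv, h10, hξ₁]
    field_simp
    ring
  · have := mdiv_outer_eq ξ ξ₁ f g hf hg (μ * t) ξ₁ ξ₂ x i
    simp only [← hWfun, ← hDfun] at this
    rw [this, ← hu, ← hv, h20, h21]
    ring
  · have := mdiv_outer_eq ξ ξ₁ f g hf hg (μ * t) ξ₂ ξ₂ x i
    simp only [← hDfun] at this
    rw [this, ← hu, ← hv, h20, h21]
    ring
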